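/- Let p be prime, M a divisor of p-1, and M a multiplicative subgroup of U_p of order M. For any x, y ∈ C^p, Σ_{m∈M} Σ_{k∈Z_p} |⟨x, T_k D_m y⟩|² = p ( M |ŷ(0)|² |x̂(0)|² + (Σ_{m∈M} |ŷ(m)|²)(Σ_{ℓ∈M} |x̂(ℓ)|²) + Σ_{ℓ∈U_p∖M} γ_ℓ(y,M) |x̂(ℓ)|² ), where γ_ℓ(y,M) = Σ_{m∈M} |ŷ(mℓ)|². -/

import Mathlib

open scoped BigOperators Classical Pointwise
open Finset

noncomputable section

/-- Translation operator on C^p. -/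
def Tr {p : ℕ} (k : ZMod p) (x : ZMod p → ℂ) : ZMod p → ℂ := fun j => x (j - k)

/-- Cyclic dilation operator on C^p. -/
def Dil {p : ℕ} (m : ZMod p) (x : ZMod p → ℂ) : ZMod p → ℂ := fun j => x (m⁻¹ * j)

/-- Unitary discrete Fourier transform on C^p. -/
def dft (p : ℕ) [NeZero p] (x : ZMod p → ℂ) : ZMod p → ℂ := fun ℓ =>
  (Real.sqrt p : ℂ)⁻¹ *
    ∑ k : ZMod p, x k * Complex.exp (-(2 * Real.pi * Complex.I * (ℓ.val * k.val)) / p)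

/-- Inner product on C^p. -/
def ip (p : ℕ) [NeZero p] (x y : ZMod p → ℂ) : ℂ :=
  ∑ g : ZMod p, x g * (starRingEnd ℂ) (y g)

namespace WaveletAux

variable {p : ℕ} [hp : Fact p.Prime]

def ζ (p : ℕ) : ℂ := Complex.exp (2 * Real.pi * Complex.I / p)

def E (a : ZMod p) : ℂ := ζ p ^ a.val

lemma prim : IsPrimitiveRoot (ζ p) p :=
  Complex.isPrimitiveRoot_exp p (Nat.Prime.ne_zero hp.out)

lemma zeta_pow_p : (ζ p) ^ p = 1 := prim.pow_eq_one

lemma zeta_pow_mod (n : ℕ) : (ζ p) ^ n = (ζ p) ^ (n % p) := by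
  conv_lhs => rw [← Nat.mod_add_div n p, pow_add, pow_mul, zeta_pow_p, one_pow, mul_one]

lemma E_zero : E (0 : ZMod p) = 1 := by
  simp [E, ZMod.val_zero]

lemma E_add (a b : ZMod p) : E (a + b) = E a * E b := by
  rw [E, E, E, ← pow_add, ZMod.val_add, ← zeta_pow_mod]

lemma E_ne_zero (a : ZMod p) : E a ≠ 0 :=
  pow_ne_zero _ (prim.ne_zero (Nat.Prime.ne_zero hp.out))

omit hp in
lemma zeta_norm : ‖ζ p‖ = 1 := by
  have h : (2 * (Real.pi : ℂ) * Complex.I / p : ℂ) = ((2 * Real.pi / p : ℝ) : ℂ) * Complex.I := by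
    push_cast; ring
  rw [ζ, h, Complex.norm_exp_ofReal_mul_I]

lemma conj_E (a : ZMod p) : (starRingEnd ℂ) (E a) = E (-a) := by
  have h1 : E a * (starRingEnd ℂ) (E a) = 1 := by
    rw [Complex.mul_conj, Complex.normSq_eq_norm_sq, E, norm_pow, zeta_norm]
    norm_num
  have h2 : E a * E (-a) = 1 := by
    rw [← E_add, add_neg_cancel, E_zero]
  exact mul_left_cancel₀ (E_ne_zero a) (h1.trans h2.symm)

lemma E_mul_eq_pow (a k : ZMod p) : E (a * k) = (E a) ^ k.val := by
  rw [E, E, ← pow_mul, ZMod.val_mul, ← zeta_pow_mod]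

lemma sum_E (a : ZMod p) : ∑ k : ZMod p, E (a * k) = if a = 0 then (p : ℂ) else 0 := by
  split_ifs with h
  · subst h
    simp [E_zero, ZMod.card]
  · have hcop : Nat.Coprime a.val p := by
      rw [Nat.coprime_comm]
      exact (Nat.Prime.coprime_iff_not_dvd hp.out).2 (fun hd => h (by
        have h0 : a.val = 0 := Nat.eq_zero_of_dvd_of_lt hd (ZMod.val_lt a)
        exact (ZMod.val_eq_zero a).1 h0))
    have hprim : IsPrimitiveRoot (E a) p := by
      rw [E]; exact prim.pow_of_coprime a.val hcop
    have hgeom : ∑ i ∈ Finset.range p, (E a) ^ i = 0 :=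
      hprim.geom_sum_eq_zero hp.out.one_lt
    calc ∑ k : ZMod p, E (a * k) = ∑ k : ZMod p, (E a) ^ k.val := by
          simp_rw [E_mul_eq_pow]
      _ = ∑ i ∈ Finset.range p, (E a) ^ i := by
          refine Finset.sum_nbij' (fun k => k.val) (fun i => (i : ZMod p)) ?_ ?_ ?_ ?_ ?_
          · intro k _; exact Finset.mem_range.2 (ZMod.val_lt k)
          · intro i _; exact Finset.mem_univ _
          · intro k _; exact ZMod.natCast_rightInverse k
          · intro i hi; exact ZMod.val_cast_of_lt (Finset.mem_range.1 hi)
          · intro k _; rfl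
      _ = 0 := hgeom

lemma dft_eq (x : ZMod p → ℂ) (ℓ : ZMod p) :
    dft p x ℓ = (Real.sqrt p : ℂ)⁻¹ * ∑ k : ZMod p, x k * (starRingEnd ℂ) (E (ℓ * k)) := by
  unfold dft
  congr 1
  refine Finset.sum_congr rfl fun k _ => ?_
  congr 1
  have h1 : E (ℓ * k) = Complex.exp ((ℓ.val * k.val : ℕ) * (2 * Real.pi * Complex.I / p)) := by
    rw [E, ZMod.val_mul, ← zeta_pow_mod, ζ, ← Complex.exp_nat_mul]
  rw [h1, ← Complex.exp_conj]
  congr 1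
  simp only [map_mul, map_div₀, Complex.conj_I, Complex.conj_ofReal, map_natCast, map_ofNat]
  push_cast
  ring

/-- orthogonality-based Plancherel for expansions in the characters -/
lemma sumsq (w : ZMod p → ℂ) :
    ∑ k : ZMod p, (∑ ℓ : ZMod p, w ℓ * E (ℓ * k)) *
        (starRingEnd ℂ) (∑ ℓ : ZMod p, w ℓ * E (ℓ * k)) =
      p * ∑ ℓ : ZMod p, w ℓ * (starRingEnd ℂ) (w ℓ) := by
  have step1 : ∀ k : ZMod p,
      (∑ ℓ : ZMod p, w ℓ * E (ℓ * k)) * (starRingEnd ℂ) (∑ ℓ : ZMod p, w ℓ * E (ℓ * k)) =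
      ∑ ℓ : ZMod p, ∑ ℓ' : ZMod p, (w ℓ * (starRingEnd ℂ) (w ℓ')) * E ((ℓ - ℓ') * k) := by
    intro k
    rw [map_sum, Finset.sum_mul_sum]
    refine Finset.sum_congr rfl fun ℓ _ => Finset.sum_congr rfl fun ℓ' _ => ?_
    rw [map_mul, conj_E]
    have hE : E ((ℓ - ℓ') * k) = E (ℓ * k) * E (-(ℓ' * k)) := by
      rw [← E_add]; congr 1; ring
    rw [hE]; ring
  simp_rw [step1]
  rw [Finset.sum_comm]
  have step2 : ∀ ℓ : ZMod p,
      ∑ k : ZMod p, ∑ ℓ' : ZMod p, (w ℓ * (starRingEnd ℂ) (w ℓ')) * E ((ℓ - ℓ') * k) =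
      (w ℓ * (starRingEnd ℂ) (w ℓ)) * p := by
    intro ℓ
    rw [Finset.sum_comm]
    have : ∀ ℓ' : ZMod p,
        ∑ k : ZMod p, (w ℓ * (starRingEnd ℂ) (w ℓ')) * E ((ℓ - ℓ') * k) =
        (w ℓ * (starRingEnd ℂ) (w ℓ')) * (if ℓ' = ℓ then (p : ℂ) else 0) := by
      intro ℓ'
      rw [← Finset.mul_sum, sum_E]
      congr 1
      simp [sub_eq_zero, eq_comm]
    simp_rw [this]
    simp [mul_ite, mul_zero, Finset.sum_ite_eq']
  simp_rw [step2]
  rw [← Finset.sum_mul]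
  ring

lemma ck_repr (x z : ZMod p → ℂ) (k : ZMod p) :
    ip p x (Tr k z) = ∑ ℓ : ZMod p, (dft p x ℓ * (starRingEnd ℂ) (dft p z ℓ)) * E (ℓ * k) := by
  have hp0 : (p : ℂ) ≠ 0 := Nat.cast_ne_zero.2 (Nat.Prime.ne_zero hp.out)
  have hA : ((Real.sqrt p : ℂ))⁻¹ * ((Real.sqrt p : ℂ))⁻¹ = ((p : ℂ))⁻¹ := by
    rw [← mul_inv, ← Complex.ofReal_mul, Real.mul_self_sqrt (Nat.cast_nonneg p)]
    norm_num
  have hterm : ∀ ℓ : ZMod p, (dft p x ℓ * (starRingEnd ℂ) (dft p z ℓ)) * E (ℓ * k)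
      = ((p:ℂ))⁻¹ * ∑ g : ZMod p, ∑ u : ZMod p,
          (x g * (starRingEnd ℂ) (z u)) * E ((u + k - g) * ℓ) := by
    intro ℓ
    rw [dft_eq x ℓ, dft_eq z ℓ, map_mul, map_inv₀, Complex.conj_ofReal, map_sum]
    simp only [map_mul, Complex.conj_conj]
    rw [mul_mul_mul_comm, hA, Finset.sum_mul_sum, mul_assoc, Finset.sum_mul]
    congr 1
    refine Finset.sum_congr rfl fun g _ => ?_
    rw [Finset.sum_mul]
    refine Finset.sum_congr rfl fun u _ => ?_
    rw [conj_E]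
    have hE : E ((u + k - g) * ℓ) = E (-(ℓ * g)) * E (ℓ * u) * E (ℓ * k) := by
      rw [← E_add, ← E_add]; congr 1; ring
    rw [hE]; ring
  have hgu : ∀ g u : ZMod p,
      ∑ ℓ : ZMod p, (x g * (starRingEnd ℂ) (z u)) * E ((u + k - g) * ℓ)
      = (x g * (starRingEnd ℂ) (z u)) * (if u = g - k then (p:ℂ) else 0) := by
    intro g u
    rw [← Finset.mul_sum, sum_E]
    have hiff : (u + k - g = 0) ↔ (u = g - k) := by
      rw [sub_eq_zero, eq_sub_iff_add_eq]
    simp [hiff]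
  calc ip p x (Tr k z)
      = (p:ℂ)⁻¹ * ∑ g : ZMod p, ∑ u : ZMod p, ∑ ℓ : ZMod p,
          (x g * (starRingEnd ℂ) (z u)) * E ((u + k - g) * ℓ) := by
        simp_rw [hgu]
        simp only [mul_ite, mul_zero, Finset.sum_ite_eq', Finset.mem_univ, if_true]
        rw [Finset.mul_sum]
        unfold ip Tr
        refine Finset.sum_congr rfl fun g _ => ?_
        field_simp
    _ = (p:ℂ)⁻¹ * ∑ ℓ : ZMod p, ∑ g : ZMod p, ∑ u : ZMod p,
          (x g * (starRingEnd ℂ) (z u)) * E ((u + k - g) * ℓ) := by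
        congr 1
        rw [show (∑ g : ZMod p, ∑ u : ZMod p, ∑ ℓ : ZMod p,
            (x g * (starRingEnd ℂ) (z u)) * E ((u + k - g) * ℓ))
            = ∑ g : ZMod p, ∑ ℓ : ZMod p, ∑ u : ZMod p,
            (x g * (starRingEnd ℂ) (z u)) * E ((u + k - g) * ℓ) from
          Finset.sum_congr rfl (fun g _ => Finset.sum_comm)]
        exact Finset.sum_comm
    _ = ∑ ℓ : ZMod p, (dft p x ℓ * (starRingEnd ℂ) (dft p z ℓ)) * E (ℓ * k) := by
        simp_rw [hterm]
        rw [← Finset.mul_sum]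

lemma translate_sum (x z : ZMod p → ℂ) :
    ∑ k : ZMod p, ‖ip p x (Tr k z)‖^2
      = p * ∑ ℓ : ZMod p, ‖dft p x ℓ‖^2 * ‖dft p z ℓ‖^2 := by
  set w : ZMod p → ℂ := fun ℓ => dft p x ℓ * (starRingEnd ℂ) (dft p z ℓ) with hw
  have hcsum : ∑ k : ZMod p, ip p x (Tr k z) * (starRingEnd ℂ) (ip p x (Tr k z))
      = p * ∑ ℓ : ZMod p, w ℓ * (starRingEnd ℂ) (w ℓ) := by
    simp_rw [ck_repr x z]
    exact sumsq w
  have lhs_eq : ∑ k : ZMod p, ‖ip p x (Tr k z)‖^2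
      = (∑ k : ZMod p, ip p x (Tr k z) * (starRingEnd ℂ) (ip p x (Tr k z))).re := by
    rw [Complex.re_sum]
    refine Finset.sum_congr rfl fun k _ => ?_
    rw [Complex.mul_conj, Complex.normSq_eq_norm_sq]
    norm_cast
  rw [lhs_eq, hcsum]
  simp_rw [Complex.mul_conj]
  push_cast [← Complex.ofReal_sum]
  rw [← Complex.ofReal_natCast, ← Complex.ofReal_mul, Complex.ofReal_re]
  congr 1
  refine Finset.sum_congr rfl fun ℓ _ => ?_
  rw [hw]
  simp only [Complex.normSq_mul, Complex.normSq_conj]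
  rw [Complex.normSq_eq_norm_sq, Complex.normSq_eq_norm_sq]

lemma dft_dil (m : (ZMod p)ˣ) (y : ZMod p → ℂ) (ℓ : ZMod p) :
    dft p (Dil ((m : (ZMod p)ˣ) : ZMod p) y) ℓ = dft p y ((m : ZMod p) * ℓ) := by
  rw [dft_eq, dft_eq]
  congr 1
  refine (Fintype.sum_equiv (Equiv.mulLeft₀ (m : ZMod p) (Units.ne_zero m))
    (fun k => y k * (starRingEnd ℂ) (E ((m : ZMod p) * ℓ * k)))
    (fun j => Dil ((m : (ZMod p)ˣ) : ZMod p) y j * (starRingEnd ℂ) (E (ℓ * j))) ?_).symm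
  intro k
  unfold Dil
  have h1 : (Equiv.mulLeft₀ ((m : (ZMod p)ˣ) : ZMod p) (Units.ne_zero m)) k
      = ((m : (ZMod p)ˣ) : ZMod p) * k := rfl
  rw [h1]
  simp only [inv_mul_cancel_left₀ (Units.ne_zero m)]
  have h2 : ((m : (ZMod p)ˣ) : ZMod p) * ℓ * k = ℓ * (((m : (ZMod p)ˣ) : ZMod p) * k) := by ring
  rw [h2]

end WaveletAux

theorem wavelet_norm_formula {p : ℕ} [Fact p.Prime]
    (M : Subgroup (ZMod p)ˣ) (hMd : Fintype.card M ∣ p - 1)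
    (x y : ZMod p → ℂ) :
    ∑ m : M, ∑ k : ZMod p, ‖ip p x (Tr k (Dil ((m : (ZMod p)ˣ) : ZMod p) y))‖ ^ 2 =
      p * ((Fintype.card M : ℝ) * ‖dft p y 0‖ ^ 2 * ‖dft p x 0‖ ^ 2 +
        (∑ m : M, ‖dft p y ((m : (ZMod p)ˣ) : ZMod p)‖ ^ 2) *
          (∑ ℓ : M, ‖dft p x ((ℓ : (ZMod p)ˣ) : ZMod p)‖ ^ 2) +
        ∑ ℓ ∈ Finset.univ.filter (fun ℓ : (ZMod p)ˣ => ℓ ∉ M),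
          (∑ m : M, ‖dft p y ((((m : (ZMod p)ˣ) * ℓ : (ZMod p)ˣ)) : ZMod p)‖ ^ 2) *
            ‖dft p x ((ℓ : (ZMod p)ˣ) : ZMod p)‖ ^ 2) := by
  classical
  set G : ZMod p → ℝ := fun ℓ =>
    (∑ m : M, ‖dft p y (((m : (ZMod p)ˣ) : ZMod p) * ℓ)‖^2) * ‖dft p x ℓ‖^2 with hG
  -- Step 1: LHS = p * ∑_{ℓ : ZMod p} G ℓ
  have hLHS : (∑ m : M, ∑ k : ZMod p,
        ‖ip p x (Tr k (Dil ((m : (ZMod p)ˣ) : ZMod p) y))‖ ^ 2)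
      = p * ∑ ℓ : ZMod p, G ℓ := by
    have h1 : ∀ m : M, ∑ k : ZMod p,
        ‖ip p x (Tr k (Dil ((( m : (ZMod p)ˣ)) : ZMod p) y))‖^2
        = p * ∑ ℓ : ZMod p,
            ‖dft p x ℓ‖^2 * ‖dft p y ((((m : (ZMod p)ˣ)) : ZMod p) * ℓ)‖^2 := by
      intro m
      rw [WaveletAux.translate_sum]
      congr 1
      refine Finset.sum_congr rfl fun ℓ _ => ?_
      rw [WaveletAux.dft_dil]
    calc ∑ m : M, ∑ k : ZMod p,
          ‖ip p x (Tr k (Dil ((m : (ZMod p)ˣ) : ZMod p) y))‖ ^ 2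
        = ∑ m : M, (p : ℝ) * ∑ ℓ : ZMod p,
            ‖dft p x ℓ‖^2 * ‖dft p y ((((m : (ZMod p)ˣ)) : ZMod p) * ℓ)‖^2 :=
          Finset.sum_congr rfl fun m _ => h1 m
      _ = (p : ℝ) * ∑ m : M, ∑ ℓ : ZMod p,
            ‖dft p x ℓ‖^2 * ‖dft p y ((((m : (ZMod p)ˣ)) : ZMod p) * ℓ)‖^2 := by
          rw [Finset.mul_sum]
      _ = p * ∑ ℓ : ZMod p, G ℓ := by
          rw [Finset.sum_comm]
          congr 1
          refine Finset.sum_congr rfl fun ℓ _ => ?_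
          simp only [hG]
          rw [Finset.sum_mul]
          refine Finset.sum_congr rfl fun m _ => ?_
          ring
  -- Step 2: split the sum over ZMod p
  have hsplit : ∑ ℓ : ZMod p, G ℓ = G 0 + ∑ u : (ZMod p)ˣ, G ↑u := by
    rw [← Finset.sum_erase_add Finset.univ G (Finset.mem_univ 0), add_comm]
    congr 1
    refine (Finset.sum_nbij' (fun u : (ZMod p)ˣ => (↑u : ZMod p))
      (fun ℓ : ZMod p => if h : ℓ = 0 then 1 else Units.mk0 ℓ h) ?_ ?_ ?_ ?_ ?_).symm
    · intro u _; exact Finset.mem_erase.2 ⟨Units.ne_zero u, Finset.mem_univ _⟩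
    · intro ℓ _; exact Finset.mem_univ _
    · intro u _; simp [Units.ne_zero u]
    · intro ℓ hℓ
      have h0 := (Finset.mem_erase.1 hℓ).1
      simp [h0]
    · intro u _; rfl
  have hG0 : G 0 = (Fintype.card M : ℝ) * ‖dft p y 0‖^2 * ‖dft p x 0‖^2 := by
    simp only [hG, mul_zero, Finset.sum_const, Finset.card_univ, nsmul_eq_mul]
    try ring
  have hsplit2 : ∑ u : (ZMod p)ˣ, G ↑u
      = (∑ u ∈ Finset.univ.filter (fun u : (ZMod p)ˣ => u ∈ M), G ↑u)
        + ∑ u ∈ Finset.univ.filter (fun u : (ZMod p)ˣ => u ∉ M), G ↑u :=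
    (Finset.sum_filter_add_sum_filter_not _ _ _).symm
  -- Step 3: the M part
  have hre : ∀ u : (ZMod p)ˣ, u ∈ M →
      (∑ m : M, ‖dft p y (((m : (ZMod p)ˣ) : ZMod p) * ↑u)‖^2)
      = ∑ m : M, ‖dft p y ((m : (ZMod p)ˣ) : ZMod p)‖^2 := by
    intro u hu
    refine Fintype.sum_equiv (Equiv.mulRight (⟨u, hu⟩ : M)) _ _ ?_
    intro m
    congr 2
  have hMsum : ∑ u ∈ Finset.univ.filter (fun u : (ZMod p)ˣ => u ∈ M), G ↑u
      = (∑ m : M, ‖dft p y ((m : (ZMod p)ˣ) : ZMod p)‖^2) *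
          (∑ ℓ : M, ‖dft p x ((ℓ : (ZMod p)ˣ) : ZMod p)‖^2) := by
    calc ∑ u ∈ Finset.univ.filter (fun u : (ZMod p)ˣ => u ∈ M), G ↑u
        = ∑ u ∈ Finset.univ.filter (fun u : (ZMod p)ˣ => u ∈ M),
            (∑ m : M, ‖dft p y ((m : (ZMod p)ˣ) : ZMod p)‖^2) * ‖dft p x ↑u‖^2 := by
          refine Finset.sum_congr rfl fun u hu => ?_
          simp only [hG]
          rw [hre u (Finset.mem_filter.1 hu).2]
      _ = (∑ m : M, ‖dft p y ((m : (ZMod p)ˣ) : ZMod p)‖^2) *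
            ∑ u ∈ Finset.univ.filter (fun u : (ZMod p)ˣ => u ∈ M), ‖dft p x ↑u‖^2 := by
          rw [← Finset.mul_sum]
      _ = (∑ m : M, ‖dft p y ((m : (ZMod p)ˣ) : ZMod p)‖^2) *
            (∑ ℓ : M, ‖dft p x ((ℓ : (ZMod p)ˣ) : ZMod p)‖^2) := by
          congr 1
          rw [Finset.sum_subtype (p := fun u : (ZMod p)ˣ => u ∈ M)
            (Finset.univ.filter fun u : (ZMod p)ˣ => u ∈ M)
            (fun u => by simp) (fun u : (ZMod p)ˣ => ‖dft p x (↑u : ZMod p)‖^2)]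
  -- Step 4: the complement part
  have hcomp : ∑ u ∈ Finset.univ.filter (fun u : (ZMod p)ˣ => u ∉ M), G ↑u
      = ∑ ℓ ∈ Finset.univ.filter (fun ℓ : (ZMod p)ˣ => ℓ ∉ M),
          (∑ m : M, ‖dft p y ((((m : (ZMod p)ˣ) * ℓ : (ZMod p)ˣ)) : ZMod p)‖ ^ 2) *
            ‖dft p x ((ℓ : (ZMod p)ˣ) : ZMod p)‖ ^ 2 := by
    refine Finset.sum_congr rfl fun u _ => ?_
    simp only [hG, Units.val_mul]
  rw [hLHS, hsplit, hsplit2, hG0, hMsum, hcomp]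
  ring
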